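/- For any prime p ≥ 5 and nonnegative integer m, the product (mp+1)(mp+2)···(mp+p−1) is congruent to (p−1)! modulo p^3. -/

import Mathlib

open Polynomial Finset

noncomputable def qInt (n : ℕ) : Polynomial ℤ := ∑ i ∈ Finset.range n, X ^ i

noncomputable def qBinom : ℕ → ℕ → Polynomial ℤ
  | _, 0 => 1
  | 0, _ + 1 => 0
  | n + 1, k + 1 => qBinom n k + X ^ (k + 1) * qBinom n (k + 1)
lemma zmodp_prod (p : ℕ) (hp : p.Prime) :
    (∏ i ∈ Finset.Ico 1 p, (X + C (i : ZMod p))) = X ^ (p - 1) - 1 := by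
  haveI : Fact p.Prime := ⟨hp⟩
  have hp1 : 1 < p := hp.one_lt
  have hq : Fintype.card (ZMod p) = p := ZMod.card p
  have hroots : roots (X ^ p - X : (ZMod p)[X]) = Finset.univ.val := by
    have := FiniteField.roots_X_pow_card_sub_X (ZMod p)
    rwa [hq] at this
  have hmonic : (X ^ p - X : (ZMod p)[X]).Monic :=
    monic_X_pow_sub (by simpa using (by exact_mod_cast hp1 : (1 : WithBot ℕ) < p))
  have hdeg : (X ^ p - X : (ZMod p)[X]).natDegree = p :=
    FiniteField.X_pow_card_sub_X_natDegree_eq (ZMod p) hp1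
  have hfact : ((X ^ p - X : (ZMod p)[X]).roots.map fun a => X - C a).prod
      = X ^ p - X :=
    prod_multiset_X_sub_C_of_monic_of_roots_card_eq hmonic (by
      rw [hroots, hdeg]; simp [hq])
  rw [hroots] at hfact
  have huniv : ∏ a : ZMod p, (X - C a) = X ^ p - X := hfact
  -- split off a = 0
  have h0 : (univ : Finset (ZMod p)) = insert 0 (univ.erase 0) := by
    simp [Finset.insert_erase (Finset.mem_univ (0 : ZMod p))]
  have hsplit : (X : (ZMod p)[X]) * ∏ a ∈ (univ : Finset (ZMod p)).erase 0, (X - C a)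
      = X ^ p - X := by
    rw [← huniv, h0, Finset.prod_insert (Finset.notMem_erase 0 _)]
    simp
  have hXp : (X ^ p - X : (ZMod p)[X]) = X * (X ^ (p - 1) - 1) := by
    have : p - 1 + 1 = p := Nat.succ_pred_eq_of_pos hp.pos
    rw [mul_sub, mul_one, ← pow_succ', this]
  have herase : ∏ a ∈ (univ : Finset (ZMod p)).erase 0, (X - C a)
      = X ^ (p - 1) - 1 := by
    apply mul_left_cancel₀ (X_ne_zero : (X : (ZMod p)[X]) ≠ 0)
    rw [hsplit, hXp]
  -- bijection i ↦ -(i : ZMod p)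
  rw [← herase]
  refine Finset.prod_nbij' (fun n => -(n : ZMod p)) (fun a => (-a).val) ?_ ?_ ?_ ?_ ?_
  · intro n hn
    simp only [Finset.mem_Ico] at hn
    have : (n : ZMod p) ≠ 0 := by
      rw [Ne, ZMod.natCast_eq_zero_iff]
      exact fun h => absurd (Nat.le_of_dvd (by omega) h) (by omega)
    simp [Finset.mem_erase, this]
  · intro a ha
    simp only [Finset.mem_erase, Finset.mem_univ, and_true] at ha
    have h1 : (-a).val < p := ZMod.val_lt _
    have h2 : (-a).val ≠ 0 := by
      rw [Ne, ZMod.val_eq_zero]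
      simpa using ha
    simp only [Finset.mem_Ico]
    omega
  · intro n hn
    simp only [Finset.mem_Ico] at hn
    show (-(-(n : ZMod p))).val = n
    rw [neg_neg, ZMod.val_natCast_of_lt hn.2]
  · intro a ha
    simp [ZMod.natCast_val, ZMod.cast_id]
  · intro n hn
    simp [sub_neg_eq_add]

theorem glaisher_product_congruence (p : ℕ) (hp : p.Prime) (hp5 : 5 ≤ p) (m : ℕ) :
    (∏ i ∈ Finset.Ico 1 p, ((m : ℤ) * p + i)) ≡ ((p - 1).factorial : ℕ) [ZMOD ((p : ℤ) ^ 3)] := by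
  haveI : Fact p.Prime := ⟨hp⟩
  set f : ℤ[X] := ∏ i ∈ Finset.Ico 1 p, (X + C (i : ℤ)) with hf
  have hdeg : f.natDegree < p := by
    rw [hf, natDegree_prod_of_monic _ _ (fun i _ => monic_X_add_C _)]
    simp only [natDegree_X_add_C, Finset.sum_const, Nat.card_Ico, smul_eq_mul, mul_one]
    omega
  have heval : ∀ x : ℤ, f.eval x = ∏ i ∈ Finset.Ico 1 p, (x + i) := by
    intro x; rw [hf, eval_prod]; simp
  have hfac : (∏ i ∈ Finset.Ico 1 p, (i : ℤ)) = ((p - 1).factorial : ℕ) := by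
    rw [← Nat.cast_prod]
    congr 1
    have h := Finset.prod_Ico_id_eq_factorial (p - 1)
    rwa [show p - 1 + 1 = p by omega] at h
  have hc0 : f.coeff 0 = ((p - 1).factorial : ℕ) := by
    have := heval 0
    rw [← coeff_zero_eq_eval_zero] at this
    simpa [hfac] using this
  -- p ∣ coeff 2
  have hc2 : (p : ℤ) ∣ f.coeff 2 := by
    rw [← ZMod.intCast_zmod_eq_zero_iff_dvd]
    have hmap : f.map (Int.castRingHom (ZMod p)) = X ^ (p - 1) - 1 := by
      rw [hf, Polynomial.map_prod, ← zmodp_prod p hp]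
      apply Finset.prod_congr rfl
      intro i _
      simp
    have : (f.map (Int.castRingHom (ZMod p))).coeff 2 = ((f.coeff 2 : ℤ) : ZMod p) := by
      simp [coeff_map]
    rw [← this, hmap]
    rw [coeff_sub, coeff_X_pow, coeff_one]
    have : ¬ (2 = p - 1) := by omega
    simp [this]
  -- key truncation lemma
  have key : ∀ x : ℤ, (p : ℤ) ∣ x →
      ((p : ℤ) ^ 3) ∣ f.eval x - (f.coeff 0 + f.coeff 1 * x + f.coeff 2 * x ^ 2) := by
    intro x hx
    rw [eval_eq_sum_range' hdeg]
    have hsplit : ∑ k ∈ Finset.range p, f.coeff k * x ^ k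
        = (∑ k ∈ Finset.range 3, f.coeff k * x ^ k) + ∑ k ∈ Finset.Ico 3 p, f.coeff k * x ^ k := by
      simp only [Finset.range_eq_Ico]
      exact (Finset.sum_Ico_consecutive _ (by omega) (by omega)).symm
    rw [hsplit]
    have h3 : (∑ k ∈ Finset.range 3, f.coeff k * x ^ k)
        = f.coeff 0 + f.coeff 1 * x + f.coeff 2 * x ^ 2 := by
      rw [Finset.sum_range_succ, Finset.sum_range_succ, Finset.sum_range_one]
      ring
    rw [h3, add_sub_cancel_left]
    apply Finset.dvd_sum
    intro k hk
    simp only [Finset.mem_Ico] at hk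
    have h1 : ((p : ℤ)) ^ 3 ∣ x ^ 3 := pow_dvd_pow_of_dvd hx 3
    have h2 : x ^ 3 ∣ x ^ k := pow_dvd_pow x hk.1
    exact dvd_mul_of_dvd_right (h1.trans h2) _
  -- p^2 ∣ coeff 1, via eval at -p
  have hevalneg : f.eval (-(p : ℤ)) = ((p - 1).factorial : ℕ) := by
    rw [heval, ← hfac]
    have hcongr : ∀ i ∈ Finset.Ico 1 p, (-(p : ℤ) + i) = -((p : ℤ) - i) :=
      fun i _ => by ring
    have hneg : ∏ x ∈ Finset.Ico 1 p, -((p : ℤ) - x)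
        = (-1 : ℤ) ^ (Finset.Ico 1 p).card * ∏ x ∈ Finset.Ico 1 p, ((p : ℤ) - x) := by
      rw [← Finset.prod_const, ← Finset.prod_mul_distrib]
      exact Finset.prod_congr rfl fun x _ => by ring
    rw [Finset.prod_congr rfl hcongr, hneg, Nat.card_Ico]
    have hev : Even (p - 1) :=
      Nat.Odd.sub_odd (hp.odd_of_ne_two (by omega)) odd_one
    rw [hev.neg_one_pow, one_mul]
    refine Finset.prod_nbij' (fun i => p - i) (fun i => p - i) ?_ ?_ ?_ ?_ ?_ <;>
      intro i hi <;> simp only [Finset.mem_Ico] at hi ⊢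
    · omega
    · omega
    · omega
    · omega
    · push_cast [Nat.cast_sub (le_of_lt hi.2)]
      ring
  have hc1 : (p : ℤ) ^ 2 ∣ f.coeff 1 := by
    have hk := key (-(p : ℤ)) (dvd_neg.2 dvd_rfl)
    rw [hevalneg, hc0] at hk
    have hd : ((p : ℤ)) ^ 3 ∣ f.coeff 1 * p := by
      have hc2' : ((p : ℤ)) ^ 3 ∣ f.coeff 2 * (-(p : ℤ)) ^ 2 := by
        obtain ⟨c, hc⟩ := hc2
        refine ⟨c, ?_⟩
        rw [hc]; ring
      have := dvd_add hk hc2'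
      convert this using 1
      · rfl
      ring
    have hp0 : (p : ℤ) ≠ 0 := by exact_mod_cast hp.ne_zero
    rw [show ((p:ℤ))^3 = (p:ℤ)^2 * p by ring] at hd
    exact (mul_dvd_mul_iff_right hp0).1 hd
  -- conclude
  have hk := key ((m : ℤ) * p) ⟨m, mul_comm _ _⟩
  rw [hc0] at hk
  have h1 : ((p : ℤ)) ^ 3 ∣ f.coeff 1 * ((m : ℤ) * p) := by
    obtain ⟨c, hc⟩ := hc1
    exact ⟨c * m, by rw [hc]; ring⟩
  have h2 : ((p : ℤ)) ^ 3 ∣ f.coeff 2 * ((m : ℤ) * p) ^ 2 := by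
    obtain ⟨c, hc⟩ := hc2
    exact ⟨c * m ^ 2, by rw [hc]; ring⟩
  have : ((p : ℤ)) ^ 3 ∣ f.eval ((m : ℤ) * p) - ((p - 1).factorial : ℕ) := by
    have := (hk.add h1).add h2
    convert this using 1
    · rfl
    ring
  rw [heval] at this
  exact Int.ModEq.symm (Int.modEq_iff_dvd.2 this)
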